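/- arXiv:2211.08955 — 2 statements merged into one kernel-verified Lean document; each statement's English description precedes it below -/
import Mathlib

section
/- Let m, n ∈ ℕ with 0 ≤ n < m. The quotient of the ℂ-vector space of bihomogeneous polynomials of bidegree (m−1, n+1) in S by the image under δ of the space of bihomogeneous polynomials of bidegree (m,n) has dimension binom(N+m−1,N)·binom(N+n+1,N) − binom(N+m,N)·binom(N+n,N). -/
open MvPolynomial

noncomputable section

/-- The polynomial ring `ℂ[Y₀,…,Y_N,X₀,…,X_N]`: the left copy of `Fin (N+1)` indexes the
`Y`-variables, the right copy indexes the `X`-variables. -/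
abbrev S (N : ℕ) : Type := MvPolynomial (Fin (N + 1) ⊕ Fin (N + 1)) ℂ

/-- Weight giving `1` to each `Yᵢ` and `0` to each `Xᵢ`. -/
def wY (N : ℕ) : (Fin (N + 1) ⊕ Fin (N + 1)) → ℕ := Sum.elim (fun _ => 1) (fun _ => 0)

/-- Weight giving `0` to each `Yᵢ` and `1` to each `Xᵢ`. -/
def wX (N : ℕ) : (Fin (N + 1) ⊕ Fin (N + 1)) → ℕ := Sum.elim (fun _ => 0) (fun _ => 1)

/-- `A` is bihomogeneous of bidegree `(m, n)`. -/
def Bihom (N m n : ℕ) (A : S N) : Prop :=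
  A.IsWeightedHomogeneous (wY N) m ∧ A.IsWeightedHomogeneous (wX N) n

/-- The operator `δ(A) = ∑ᵢ Xᵢ · ∂A/∂Yᵢ`. -/
def deltaOp (N : ℕ) (A : S N) : S N :=
  ∑ i : Fin (N + 1), X (Sum.inr i) * pderiv (Sum.inl i) A

/-- The quadratic polynomial `q = ∑ᵢ Xᵢ·Yᵢ`. -/
def qPoly (N : ℕ) : S N := ∑ i : Fin (N + 1), X (Sum.inr i) * X (Sum.inl i)

/-- The operator `δ` as a `ℂ`-linear endomorphism of `S N`. -/
def deltaLM (N : ℕ) : S N →ₗ[ℂ] S N :=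
  ∑ i : Fin (N + 1),
    (LinearMap.mulLeft ℂ (X (Sum.inr i) : S N)) ∘ₗ (pderiv (Sum.inl i)).toLinearMap

/-- The space of bihomogeneous polynomials of bidegree `(m, n)` in `S N`. -/
def bihomSubmodule (N m n : ℕ) : Submodule ℂ (S N) :=
  weightedHomogeneousSubmodule ℂ (wY N) m ⊓ weightedHomogeneousSubmodule ℂ (wX N) n



variable {σ : Type*} 

/-- pderiv commute. -/
lemma pderiv_comm' (i j : σ) (A : MvPolynomial σ ℂ) :
    pderiv i (pderiv j A) = pderiv j (pderiv i A) := by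
  classical
  induction A using MvPolynomial.induction_on' with
  | monomial u r =>
    by_cases h : i = j
    · subst h; rfl
    · simp only [pderiv_monomial]
      rw [Finsupp.tsub_apply, Finsupp.tsub_apply, Finsupp.single_eq_of_ne' h,
        Finsupp.single_eq_of_ne' (Ne.symm h)]
      congr 1
      · rw [tsub_tsub, tsub_tsub, add_comm]
      · simp only [Nat.sub_zero]; ring
  | add p q hp hq => simp [map_add, hp, hq]

lemma X_mul_pderiv_monomial (s : σ) (u : σ →₀ ℕ) (r : ℂ) :
    X s * pderiv s (monomial u r) = (u s) • monomial u r := by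
  classical
  by_cases h : u s = 0
  · simp [h]
  · rw [pderiv_monomial, X, monomial_mul, one_mul]
    have : Finsupp.single s 1 + (u - Finsupp.single s 1) = u := by
      ext t
      by_cases ht : t = s
      · subst ht; simp; omega
      · simp [Finsupp.single_eq_of_ne' (Ne.symm ht)]
    rw [this, smul_monomial]
    congr 1
    rw [nsmul_eq_mul]; ring

lemma weight_eq_sum [Fintype σ] (w : σ → ℕ) (u : σ →₀ ℕ) :
    Finsupp.weight w u = ∑ s : σ, u s * w s := by
  rw [Finsupp.weight_apply, Finsupp.sum_fintype]
  · simp [smul_eq_mul]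
  · intro i; simp

/-- pderiv of weighted homogeneous. -/
lemma wh_pderiv {w : σ → ℕ} {A : MvPolynomial σ ℂ} {d : ℕ}
    (h : A.IsWeightedHomogeneous w d) (s : σ) :
    (pderiv s A).IsWeightedHomogeneous w (d - w s) := by
  classical
  rw [A.as_sum, map_sum]
  apply IsWeightedHomogeneous.sum
  intro u hu
  rw [pderiv_monomial]
  by_cases h0 : u s = 0
  · rw [h0]; simp only [Nat.cast_zero, mul_zero, monomial_zero]
    exact isWeightedHomogeneous_zero _ _ _
  · apply isWeightedHomogeneous_monomial
    have hu' : Finsupp.weight w u = d := h (MvPolynomial.mem_support_iff.mp hu)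
    have hsplit : Finsupp.single s 1 + (u - Finsupp.single s 1) = u := by
      ext t
      by_cases ht : t = s
      · subst ht; simp; omega
      · simp [Finsupp.single_eq_of_ne' (Ne.symm ht)]
    have := congrArg (Finsupp.weight w) hsplit
    have hws : Finsupp.weight w (Finsupp.single s 1) = w s := by
      rw [Finsupp.weight_apply, Finsupp.sum_single_index] <;> simp
    rw [map_add, hws] at this
    omega


variable {N : ℕ}

def epsLM (N : ℕ) : S N →ₗ[ℂ] S N :=
  ∑ i : Fin (N + 1),
    (LinearMap.mulLeft ℂ (X (Sum.inl i) : S N)) ∘ₗ (pderiv (Sum.inr i)).toLinearMap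

lemma deltaLM_apply (A : S N) :
    deltaLM N A = ∑ i : Fin (N + 1), X (Sum.inr i) * pderiv (Sum.inl i) A := by
  simp [deltaLM, LinearMap.sum_apply]

lemma epsLM_apply (A : S N) :
    epsLM N A = ∑ i : Fin (N + 1), X (Sum.inl i) * pderiv (Sum.inr i) A := by
  simp [epsLM, LinearMap.sum_apply]

/-- Generic Euler identity. -/
lemma euler_gen {w : Fin (N+1) ⊕ Fin (N+1) → ℕ} (e : Fin (N+1) → Fin (N+1) ⊕ Fin (N+1))
    (hsum : ∀ u : (Fin (N+1) ⊕ Fin (N+1)) →₀ ℕ, Finsupp.weight w u = ∑ i, u (e i))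
    {a : ℕ} {A : S N} (h : A.IsWeightedHomogeneous w a) :
    ∑ i : Fin (N + 1), X (e i) * pderiv (e i) A = (a : ℂ) • A := by
  classical
  have key : ∀ u ∈ A.support,
      ∑ i : Fin (N+1), X (e i) * pderiv (e i) (monomial u (coeff u A))
        = (a : ℂ) • monomial u (coeff u A) := by
    intro u hu
    have hw : ∑ i, u (e i) = a := by rw [← hsum u]; exact h (MvPolynomial.mem_support_iff.mp hu)
    calc ∑ i : Fin (N+1), X (e i) * pderiv (e i) (monomial u (coeff u A))
        = ∑ i : Fin (N+1), (u (e i)) • monomial u (coeff u A) :=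
          Finset.sum_congr rfl fun i _ => X_mul_pderiv_monomial _ _ _
      _ = (∑ i : Fin (N+1), u (e i)) • monomial u (coeff u A) := by rw [Finset.sum_smul]
      _ = (a : ℂ) • monomial u (coeff u A) := by
          rw [hw, ← Nat.cast_smul_eq_nsmul ℂ a]
  calc ∑ i : Fin (N+1), X (e i) * pderiv (e i) A
      = ∑ i : Fin (N+1), ∑ u ∈ A.support, X (e i) * pderiv (e i) (monomial u (coeff u A)) := by
        refine Finset.sum_congr rfl fun i _ => ?_
        conv_lhs => rw [A.as_sum]
        rw [map_sum, Finset.mul_sum]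
    _ = ∑ u ∈ A.support, ∑ i : Fin (N+1), X (e i) * pderiv (e i) (monomial u (coeff u A)) :=
        Finset.sum_comm
    _ = ∑ u ∈ A.support, (a : ℂ) • monomial u (coeff u A) := Finset.sum_congr rfl key
    _ = (a : ℂ) • A := by rw [← Finset.smul_sum, ← A.as_sum]

lemma weight_wY (u : (Fin (N+1) ⊕ Fin (N+1)) →₀ ℕ) :
    Finsupp.weight (wY N) u = ∑ i : Fin (N+1), u (Sum.inl i) := by
  rw [weight_eq_sum, Fintype.sum_sum_type]
  simp [wY]

lemma weight_wX (u : (Fin (N+1) ⊕ Fin (N+1)) →₀ ℕ) :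
    Finsupp.weight (wX N) u = ∑ i : Fin (N+1), u (Sum.inr i) := by
  rw [weight_eq_sum, Fintype.sum_sum_type]
  simp [wX]

lemma eulerY {a : ℕ} {A : S N} (h : A.IsWeightedHomogeneous (wY N) a) :
    ∑ i : Fin (N + 1), X (Sum.inl i) * pderiv (Sum.inl i) A = (a : ℂ) • A :=
  euler_gen Sum.inl weight_wY h

lemma eulerX {b : ℕ} {A : S N} (h : A.IsWeightedHomogeneous (wX N) b) :
    ∑ i : Fin (N + 1), X (Sum.inr i) * pderiv (Sum.inr i) A = (b : ℂ) • A :=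
  euler_gen Sum.inr weight_wX h

lemma comm_raw (A : S N) :
    deltaLM N (epsLM N A) + ∑ i : Fin (N+1), X (Sum.inl i) * pderiv (Sum.inl i) A
      = epsLM N (deltaLM N A) + ∑ i : Fin (N+1), X (Sum.inr i) * pderiv (Sum.inr i) A := by
  classical
  have key : ∀ i j : Fin (N+1),
      X (Sum.inr i) * pderiv (Sum.inl i) (X (Sum.inl j) * pderiv (Sum.inr j) A)
        + (if i = j then X (Sum.inl j) * pderiv (Sum.inl j) A else 0)
      = X (Sum.inl j) * pderiv (Sum.inr j) (X (Sum.inr i) * pderiv (Sum.inl i) A)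
        + (if i = j then X (Sum.inr i) * pderiv (Sum.inr i) A else 0) := by
    intro i j
    rw [pderiv_mul, pderiv_mul]
    by_cases h : i = j
    · subst h
      rw [pderiv_X_self, pderiv_X_self, if_pos rfl, if_pos rfl,
        pderiv_comm' (Sum.inl i) (Sum.inr i) A]
      ring
    · rw [pderiv_X_of_ne (fun hh => h (Sum.inl_injective hh).symm),
        pderiv_X_of_ne (fun hh => h (Sum.inr_injective hh)),
        if_neg h, if_neg h, pderiv_comm' (Sum.inl i) (Sum.inr j) A]
      ring
  have lhs_eq : deltaLM N (epsLM N A) + ∑ i : Fin (N+1), X (Sum.inl i) * pderiv (Sum.inl i) A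
      = ∑ i : Fin (N+1), ∑ j : Fin (N+1),
          (X (Sum.inr i) * pderiv (Sum.inl i) (X (Sum.inl j) * pderiv (Sum.inr j) A)
            + (if i = j then X (Sum.inl j) * pderiv (Sum.inl j) A else 0)) := by
    rw [deltaLM_apply, epsLM_apply]
    simp only [Finset.sum_add_distrib, map_sum, Finset.mul_sum]
    congr 1
    rw [Finset.sum_comm]
    refine (Finset.sum_congr rfl fun j _ => ?_).symm
    rw [Finset.sum_ite_eq']
    simp
  have rhs_eq : epsLM N (deltaLM N A) + ∑ i : Fin (N+1), X (Sum.inr i) * pderiv (Sum.inr i) A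
      = ∑ i : Fin (N+1), ∑ j : Fin (N+1),
          (X (Sum.inl j) * pderiv (Sum.inr j) (X (Sum.inr i) * pderiv (Sum.inl i) A)
            + (if i = j then X (Sum.inr i) * pderiv (Sum.inr i) A else 0)) := by
    rw [epsLM_apply, deltaLM_apply]
    simp only [Finset.sum_add_distrib, map_sum, Finset.mul_sum]
    refine congrArg₂ (· + ·) ?_ ?_
    · rw [Finset.sum_comm]
    · refine (Finset.sum_congr rfl fun j _ => ?_).symm
      rw [Finset.sum_ite_eq]
      simp
  rw [lhs_eq, rhs_eq]
  exact Finset.sum_congr rfl fun i _ => Finset.sum_congr rfl fun j _ => key i j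

lemma comm_apply {a b : ℕ} {A : S N} (hA : A ∈ bihomSubmodule N a b) :
    deltaLM N (epsLM N A) = epsLM N (deltaLM N A) + ((b : ℂ) - a) • A := by
  have h := comm_raw (N := N) A
  rw [eulerY hA.1, eulerX hA.2] at h
  rw [sub_smul]
  linear_combination (norm := module) h

lemma delta_mem {m n : ℕ} {A : S N} (hA : A ∈ bihomSubmodule N m n) :
    deltaLM N A ∈ bihomSubmodule N (m - 1) (n + 1) := by
  rw [deltaLM_apply]
  constructor
  · apply IsWeightedHomogeneous.sum
    intro i _
    have h1 : (X (Sum.inr i) : S N).IsWeightedHomogeneous (wY N) 0 := by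
      have := isWeightedHomogeneous_X ℂ (wY N) (Sum.inr i : Fin (N+1) ⊕ Fin (N+1))
      simpa [wY] using this
    have h2 := (wh_pderiv hA.1 (Sum.inl i))
    simp only [wY, Sum.elim_inl] at h2
    simpa using h1.mul h2
  · apply IsWeightedHomogeneous.sum
    intro i _
    have h1 : (X (Sum.inr i) : S N).IsWeightedHomogeneous (wX N) 1 := by
      have := isWeightedHomogeneous_X ℂ (wX N) (Sum.inr i : Fin (N+1) ⊕ Fin (N+1))
      simpa [wX] using this
    have h2 := (wh_pderiv hA.2 (Sum.inl i))
    simp only [wX, Sum.elim_inl, Nat.sub_zero] at h2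
    have := h1.mul h2
    rwa [Nat.add_comm 1 n] at this

lemma eps_mem {a b : ℕ} {A : S N} (hA : A ∈ bihomSubmodule N a b) :
    epsLM N A ∈ bihomSubmodule N (a + 1) (b - 1) := by
  rw [epsLM_apply]
  constructor
  · apply IsWeightedHomogeneous.sum
    intro i _
    have h1 : (X (Sum.inl i) : S N).IsWeightedHomogeneous (wY N) 1 := by
      have := isWeightedHomogeneous_X ℂ (wY N) (Sum.inl i : Fin (N+1) ⊕ Fin (N+1))
      simpa [wY] using this
    have h2 := (wh_pderiv hA.1 (Sum.inr i))
    simp only [wY, Sum.elim_inr, Nat.sub_zero] at h2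
    have := h1.mul h2
    rwa [Nat.add_comm 1 a] at this
  · apply IsWeightedHomogeneous.sum
    intro i _
    have h1 : (X (Sum.inl i) : S N).IsWeightedHomogeneous (wX N) 0 := by
      have := isWeightedHomogeneous_X ℂ (wX N) (Sum.inl i : Fin (N+1) ⊕ Fin (N+1))
      simpa [wX] using this
    have h2 := (wh_pderiv hA.2 (Sum.inr i))
    simp only [wX, Sum.elim_inr] at h2
    simpa using h1.mul h2

lemma eps_of_wX_zero {A : S N} (hA : A.IsWeightedHomogeneous (wX N) 0) :
    epsLM N A = 0 := by
  rw [epsLM_apply]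
  apply Finset.sum_eq_zero
  intro i _
  have hd : pderiv (Sum.inr i : Fin (N+1) ⊕ Fin (N+1)) A = 0 := by
    classical
    conv_lhs => rw [A.as_sum]
    rw [map_sum]
    apply Finset.sum_eq_zero
    intro u hu
    have hw : Finsupp.weight (wX N) u = 0 := hA (MvPolynomial.mem_support_iff.mp hu)
    have : u (Sum.inr i) = 0 := by
      have h1 := Finsupp.le_weight (wX N) (s := Sum.inr i) (by simp [wX]) u
      omega
    rw [pderiv_monomial, this]
    simp
  rw [hd, mul_zero]

lemma delta_inj {m n : ℕ} (hnm : n < m) {A : S N} (hA : A ∈ bihomSubmodule N m n)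
    (h0 : deltaLM N A = 0) : A = 0 := by
  set B : ℕ → S N := fun k => ((epsLM N) ^ k) A with hB
  have hB0A : B 0 = A := by simp [hB]
  have hBsucc : ∀ k, B (k + 1) = epsLM N (B k) := by
    intro k
    have : (epsLM N) ^ (k + 1) = epsLM N * (epsLM N) ^ k := by
      rw [pow_succ']
    simp [hB, this, Module.End.mul_apply]
  have hBmem : ∀ k, k ≤ n → B k ∈ bihomSubmodule N (m + k) (n - k) := by
    intro k
    induction k with
    | zero => intro _; rw [hB0A]; simpa using hA
    | succ k ih =>
      intro hk
      rw [hBsucc]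
      have := eps_mem (ih (le_of_lt (Nat.lt_of_succ_le hk)))
      have e1 : m + k + 1 = m + (k + 1) := by omega
      have e2 : n - k - 1 = n - (k + 1) := by omega
      rwa [e1, e2] at this
  set c : ℕ → ℂ := fun k => (k : ℂ) * ((n : ℂ) - m - k + 1) with hc
  have hdelta : ∀ k, k ≤ n → deltaLM N (B (k + 1)) = c (k + 1) • B k := by
    intro k
    induction k with
    | zero =>
      intro _
      rw [hBsucc, hB0A, comm_apply hA, h0, map_zero, zero_add]
      simp only [hc]
      norm_num
    | succ k ih =>
      intro hk
      have hk' : k ≤ n := by omega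
      rw [hBsucc, comm_apply (hBmem (k + 1) hk), ih hk', map_smul, ← hBsucc]
      have hcast : ((n - (k + 1) : ℕ) : ℂ) = (n : ℂ) - (k + 1) := by
        have h1 : (k : ℕ) + 1 ≤ n := hk
        push_cast [h1]
        ring
      rw [hcast, ← add_smul]
      congr 1
      simp only [hc]
      push_cast
      ring
  have hczero : ∀ k, c (k + 1) ≠ 0 := by
    intro k
    have h1 : ((k : ℂ) + 1) ≠ 0 := by
      exact_mod_cast Nat.cast_add_one_ne_zero (R := ℂ) k
    have h2 : ((n : ℂ) - m - ((k : ℂ) + 1) + 1) ≠ 0 := by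
      have he : ((n : ℂ) - m - ((k : ℂ) + 1) + 1) = (((n : ℤ) - m - (k + 1) + 1 : ℤ) : ℂ) := by
        push_cast
        ring
      rw [he]
      rw [Int.cast_ne_zero]
      omega
    simp only [hc]
    push_cast
    exact mul_ne_zero h1 h2
  have hBn1 : B (n + 1) = 0 := by
    rw [hBsucc]
    exact eps_of_wX_zero (by simpa using (hBmem n le_rfl).2)
  have hdown : ∀ j, j ≤ n + 1 → B (n + 1 - j) = 0 := by
    intro j
    induction j with
    | zero => intro _; simpa using hBn1
    | succ j ih =>
      intro hj
      have hprev : B (n + 1 - j) = 0 := ih (by omega)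
      have ht : n + 1 - j = (n - j) + 1 := by omega
      rw [ht] at hprev
      have hd := hdelta (n - j) (by omega)
      rw [hprev, map_zero] at hd
      have hBnj : B (n - j) = 0 :=
        (smul_eq_zero.mp hd.symm).resolve_left (hczero (n - j))
      have he : n + 1 - (j + 1) = n - j := by omega
      rw [he]
      exact hBnj
  have := hdown (n + 1) le_rfl
  rw [Nat.sub_self] at this
  rw [← hB0A]
  exact this

def Tset (N a b : ℕ) : Set ((Fin (N+1) ⊕ Fin (N+1)) →₀ ℕ) :=
  {u | Finsupp.weight (wY N) u = a ∧ Finsupp.weight (wX N) u = b}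

lemma bihom_eq_supported (N a b : ℕ) :
    bihomSubmodule N a b = AddMonoidAlgebra.supported ℂ ℂ (Tset N a b) := by
  rw [bihomSubmodule, weightedHomogeneousSubmodule_eq_finsupp_supported,
    weightedHomogeneousSubmodule_eq_finsupp_supported]
  ext x
  simp only [Submodule.mem_inf, AddMonoidAlgebra.mem_supported]
  exact Set.subset_inter_iff.symm

def symE (k d : ℕ) : {v : Fin k →₀ ℕ // ∑ i, v i = d} ≃ Sym (Fin k) d :=
  Equiv.subtypeEquiv (Finsupp.orderIsoMultiset).toEquiv (fun v => by
    rw [show ((Finsupp.orderIsoMultiset).toEquiv v) = Finsupp.toMultiset v from rfl]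
    rw [Finsupp.card_toMultiset, Finsupp.sum_fintype]
    · exact Iff.rfl
    · intro i; rfl)

def TEquiv (N a b : ℕ) : ↥(Tset N a b) ≃ Sym (Fin (N+1)) a × Sym (Fin (N+1)) b :=
  ((Equiv.subtypeEquiv (Finsupp.sumFinsuppEquivProdFinsupp
      (α := Fin (N+1)) (β := Fin (N+1)) (γ := ℕ))
    (fun u => by
      constructor
      · rintro ⟨h1, h2⟩
        rw [weight_wY] at h1
        rw [weight_wX] at h2
        exact ⟨by simpa [Finsupp.fst_sumFinsuppEquivProdFinsupp] using h1,
          by simpa [Finsupp.snd_sumFinsuppEquivProdFinsupp] using h2⟩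
      · rintro ⟨h1, h2⟩
        constructor
        · rw [weight_wY]
          simpa [Finsupp.fst_sumFinsuppEquivProdFinsupp] using h1
        · rw [weight_wX]
          simpa [Finsupp.snd_sumFinsuppEquivProdFinsupp] using h2)).trans
    (Equiv.subtypeProdEquivProd
      (p := fun v : Fin (N+1) →₀ ℕ => ∑ i, v i = a)
      (q := fun v : Fin (N+1) →₀ ℕ => ∑ i, v i = b))).trans
    (Equiv.prodCongr (symE (N+1) a) (symE (N+1) b))

lemma card_Tset (N a b : ℕ) [Fintype ↥(Tset N a b)] :
    Fintype.card ↥(Tset N a b) = (N + a).choose N * (N + b).choose N := by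
  rw [Fintype.card_congr (TEquiv N a b), Fintype.card_prod]
  rw [Sym.card_sym_eq_choose, Sym.card_sym_eq_choose, Fintype.card_fin]
  have e1 : N + 1 + a - 1 = N + a := by omega
  have e2 : N + 1 + b - 1 = N + b := by omega
  rw [e1, e2]
  congr 1
  · rw [← Nat.choose_symm (by omega : a ≤ N + a)]
    congr 1
    omega
  · rw [← Nat.choose_symm (by omega : b ≤ N + b)]
    congr 1
    omega

def bihomEquiv (N a b : ℕ) : ↥(bihomSubmodule N a b) ≃ₗ[ℂ] (↥(Tset N a b) →₀ ℂ) :=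
  (LinearEquiv.ofEq _ _ (bihom_eq_supported N a b)).trans
    (AddMonoidAlgebra.supportedEquivFinsupp (Tset N a b))

instance fintypeTset (N a b : ℕ) : Fintype ↥(Tset N a b) :=
  Fintype.ofEquiv _ (TEquiv N a b).symm

instance (N a b : ℕ) : FiniteDimensional ℂ ↥(bihomSubmodule N a b) :=
  Module.Finite.equiv (bihomEquiv N a b).symm

lemma finrank_bihom (N a b : ℕ) :
    Module.finrank ℂ ↥(bihomSubmodule N a b) = (N + a).choose N * (N + b).choose N := by
  rw [(bihomEquiv N a b).finrank_eq, Module.finrank_finsupp_self, card_Tset]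

set_option maxHeartbeats 1000000 in
set_option synthInstance.maxHeartbeats 400000 in
/-- For `0 ≤ n < m`, the cokernel of
`δ : S_{m,n} → S_{m−1,n+1}` has dimension
`C(N+m−1,N)·C(N+n+1,N) − C(N+m,N)·C(N+n,N)`. -/
theorem statement7 (N : ℕ) (hN : 2 ≤ N) (m n : ℕ) (hnm : n < m) :
    (Module.finrank ℂ
        (↥(bihomSubmodule N (m - 1) (n + 1)) ⧸
          (Submodule.map (deltaLM N) (bihomSubmodule N m n)).comap
            (bihomSubmodule N (m - 1) (n + 1)).subtype) : ℤ) =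
      (Nat.choose (N + m - 1) N : ℤ) * Nat.choose (N + n + 1) N -
        (Nat.choose (N + m) N : ℤ) * Nat.choose (N + n) N := by

  classical
  set V := bihomSubmodule N (m - 1) (n + 1) with hV
  set U := Submodule.map (deltaLM N) (bihomSubmodule N m n) with hU
  have hUV : U ≤ V := by
    rintro _ ⟨A, hA, rfl⟩
    exact delta_mem hA
  set W := U.comap V.subtype with hW
  have hq : Module.finrank ℂ (↥V ⧸ W) + Module.finrank ℂ ↥W = Module.finrank ℂ ↥V :=
    Submodule.finrank_quotient_add_finrank W
  have hWU : Module.finrank ℂ ↥W = Module.finrank ℂ ↥U :=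
    (Submodule.comapSubtypeEquivOfLe hUV).finrank_eq
  have hinj : Function.Injective ((deltaLM N) ∘ₗ (bihomSubmodule N m n).subtype) := by
    rw [← LinearMap.ker_eq_bot]
    rw [eq_bot_iff]
    rintro ⟨x, hx⟩ hker
    simp only [LinearMap.mem_ker, LinearMap.comp_apply, Submodule.coe_subtype] at hker
    have := delta_inj hnm hx hker
    simpa [Submodule.mem_bot] using this
  have hUrange : U = LinearMap.range ((deltaLM N) ∘ₗ (bihomSubmodule N m n).subtype) := by
    rw [LinearMap.range_comp, Submodule.range_subtype]
  have hUrank : Module.finrank ℂ ↥U = Module.finrank ℂ ↥(bihomSubmodule N m n) := by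
    rw [hUrange, LinearMap.finrank_range_of_inj hinj]
  have hVrank : Module.finrank ℂ ↥V = (N + m - 1).choose N * (N + n + 1).choose N := by
    rw [hV, finrank_bihom]
    congr 2 <;> omega
  have hmn : Module.finrank ℂ ↥(bihomSubmodule N m n) = (N + m).choose N * (N + n).choose N :=
    finrank_bihom N m n
  rw [hWU, hUrank, hmn, hVrank] at hq
  omega
end
end

section
/- Let d ≥ 3, let P ∈ S be a polynomial in the X-variables only, homogeneous of degree d, and let A ∈ S be a polynomial in the Y-variables only, homogeneous of degree d−3. Then there exists a bihomogeneous B ∈ S of bidegree (d−1, d−2) with δ(B) = A · (∇P·Y). -/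
open MvPolynomial

noncomputable section

/-- The operator `ε(A) = ∑ᵢ Yᵢ · ∂A/∂Xᵢ`. -/
def epsOp (N : ℕ) (A : S N) : S N :=
  ∑ i : Fin (N + 1), X (Sum.inl i) * pderiv (Sum.inr i) A

variable {N : ℕ}


-- basic monomial identity
lemma X_mul_pderiv_monomial_s11 (i : Fin (N+1) ⊕ Fin (N+1)) (s : (Fin (N+1) ⊕ Fin (N+1)) →₀ ℕ)
    (c : ℂ) : X i * pderiv i (monomial s c) = (s i : ℂ) • monomial s c := by
  rw [pderiv_monomial]
  by_cases h : s i = 0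
  · simp [h]
  · rw [X, monomial_mul, one_mul, smul_monomial]
    have hs : (Finsupp.single i 1) + (s - Finsupp.single i 1) = s := by
      ext j
      by_cases hj : j = i
      · subst hj
        simp only [Finsupp.add_apply, Finsupp.tsub_apply, Finsupp.single_eq_same]
        omega
      · simp [Finsupp.add_apply, Finsupp.tsub_apply, Finsupp.single_eq_of_ne' (Ne.symm hj)]
    rw [hs, smul_eq_mul, mul_comm]

lemma weight_eq_univ_sum (w : (Fin (N+1) ⊕ Fin (N+1)) → ℕ)
    (s : (Fin (N+1) ⊕ Fin (N+1)) →₀ ℕ) :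
    (Finsupp.weight w s : ℕ) = ∑ i, w i * s i := by
  rw [Finsupp.weight_apply, Finsupp.sum_fintype]
  · exact Finset.sum_congr rfl fun i _ => by simp [mul_comm]
  · intro i; simp

-- Euler
lemma euler {w : (Fin (N+1) ⊕ Fin (N+1)) → ℕ} {n : ℕ} {f : S N}
    (hf : f.IsWeightedHomogeneous w n) :
    ∑ i, (w i : ℂ) • (X i * pderiv i f) = (n : ℂ) • f := by
  conv_lhs => rw [← support_sum_monomial_coeff f]
  conv_rhs => rw [← support_sum_monomial_coeff f]
  rw [Finset.smul_sum]
  simp only [map_sum, Finset.mul_sum, Finset.smul_sum]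
  rw [Finset.sum_comm]
  refine Finset.sum_congr rfl fun s hs => ?_
  have hw : (Finsupp.weight w s : ℕ) = n := hf (mem_support_iff.mp hs)
  calc ∑ i, (w i : ℂ) • (X i * pderiv i (monomial s (coeff s f)))
      = ∑ i, ((w i * s i : ℕ) : ℂ) • monomial s (coeff s f) := by
        refine Finset.sum_congr rfl fun i _ => ?_
        rw [X_mul_pderiv_monomial_s11, smul_smul]; push_cast; ring_nf
    _ = (n : ℂ) • monomial s (coeff s f) := by
        rw [← Finset.sum_smul, ← Nat.cast_sum, ← weight_eq_univ_sum, hw]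

lemma weight_single_one (w : (Fin (N+1) ⊕ Fin (N+1)) → ℕ) (i : Fin (N+1) ⊕ Fin (N+1)) :
    (Finsupp.weight w (Finsupp.single i 1) : ℕ) = w i := by
  rw [Finsupp.weight_apply, Finsupp.sum_single_index] <;> simp

lemma hom_pderiv {w : (Fin (N+1) ⊕ Fin (N+1)) → ℕ} {n : ℕ} {f : S N}
    (hf : f.IsWeightedHomogeneous w n) (i : Fin (N+1) ⊕ Fin (N+1)) :
    (pderiv i f).IsWeightedHomogeneous w (n - w i) := by
  rw [← support_sum_monomial_coeff f, map_sum, ← mem_weightedHomogeneousSubmodule]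
  refine Submodule.sum_mem _ fun s hs => ?_
  rw [mem_weightedHomogeneousSubmodule, pderiv_monomial]
  by_cases h : s i = 0
  · simp only [h, Nat.cast_zero, mul_zero]
    rw [map_zero]
    exact isWeightedHomogeneous_zero _ _ _
  · refine isWeightedHomogeneous_monomial _ _ _ ?_
    have hsub : (Finsupp.single i 1) + (s - Finsupp.single i 1) = s := by
      ext j
      by_cases hj : j = i
      · subst hj
        simp only [Finsupp.add_apply, Finsupp.tsub_apply, Finsupp.single_eq_same]
        omega
      · simp [Finsupp.add_apply, Finsupp.tsub_apply, Finsupp.single_eq_of_ne' (Ne.symm hj)]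
    have hw : w i + (Finsupp.weight w (s - Finsupp.single i 1) : ℕ) = n := by
      rw [← weight_single_one w i, ← map_add, hsub]
      exact hf (mem_support_iff.mp hs)
    omega

lemma pderiv_eq_zero_of_hom_zero {w : (Fin (N+1) ⊕ Fin (N+1)) → ℕ} {f : S N}
    (hf : f.IsWeightedHomogeneous w 0) {i : Fin (N+1) ⊕ Fin (N+1)} (hi : w i ≠ 0) :
    pderiv i f = 0 := by
  conv_lhs => rw [← support_sum_monomial_coeff f]
  rw [map_sum]
  refine Finset.sum_eq_zero fun s hs => ?_
  have hw := hf (mem_support_iff.mp hs)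
  rw [weight_eq_univ_sum] at hw
  have hsi : s i = 0 := by
    have := Finset.sum_eq_zero_iff.mp hw i (Finset.mem_univ i)
    exact (Nat.mul_eq_zero.mp this).resolve_left hi
  rw [pderiv_monomial, hsi]
  simp

lemma hom_zero_of_supported_inr {f : S N}
    (h : f ∈ MvPolynomial.supported ℂ
      (Set.range (Sum.inr : Fin (N + 1) → Fin (N + 1) ⊕ Fin (N + 1)))) :
    f.IsWeightedHomogeneous (wY N) 0 := by
  rw [mem_supported] at h
  intro s hs
  rw [weight_eq_univ_sum]
  refine Finset.sum_eq_zero fun i _ => ?_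
  by_cases hsi : s i = 0
  · simp [hsi]
  · have hiv : i ∈ f.vars := (mem_vars i).mpr
      ⟨s, mem_support_iff.mpr hs, Finsupp.mem_support_iff.mpr hsi⟩
    obtain ⟨j, rfl⟩ := h hiv
    simp [wY]

lemma hom_zero_of_supported_inl {f : S N}
    (h : f ∈ MvPolynomial.supported ℂ
      (Set.range (Sum.inl : Fin (N + 1) → Fin (N + 1) ⊕ Fin (N + 1)))) :
    f.IsWeightedHomogeneous (wX N) 0 := by
  rw [mem_supported] at h
  intro s hs
  rw [weight_eq_univ_sum]
  refine Finset.sum_eq_zero fun i _ => ?_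
  by_cases hsi : s i = 0
  · simp [hsi]
  · have hiv : i ∈ f.vars := (mem_vars i).mpr
      ⟨s, mem_support_iff.mpr hs, Finsupp.mem_support_iff.mpr hsi⟩
    obtain ⟨j, rfl⟩ := h hiv
    simp [wX]

lemma deltaOp_add (a b : S N) : deltaOp N (a + b) = deltaOp N a + deltaOp N b := by
  simp [deltaOp, mul_add, Finset.sum_add_distrib]

lemma deltaOp_smul (c : ℂ) (a : S N) : deltaOp N (c • a) = c • deltaOp N a := by
  simp only [deltaOp, Derivation.map_smul, Finset.smul_sum, mul_smul_comm]

lemma epsOp_smul (c : ℂ) (a : S N) : epsOp N (c • a) = c • epsOp N a := by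
  simp only [epsOp, Derivation.map_smul, Finset.smul_sum, mul_smul_comm]

lemma deltaOp_sub (a b : S N) : deltaOp N (a - b) = deltaOp N a - deltaOp N b := by
  simp [deltaOp, mul_sub, Finset.sum_sub_distrib]

lemma deltaOp_mul (a b : S N) : deltaOp N (a * b) = deltaOp N a * b + a * deltaOp N b := by
  simp only [deltaOp, pderiv_mul, Finset.sum_mul, Finset.mul_sum, ← Finset.sum_add_distrib]
  exact Finset.sum_congr rfl fun i _ => by ring

lemma hom_deltaOp_wY {m : ℕ} {f : S N} (hf : f.IsWeightedHomogeneous (wY N) m) :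
    (deltaOp N f).IsWeightedHomogeneous (wY N) (m - 1) := by
  rw [← mem_weightedHomogeneousSubmodule, deltaOp]
  refine Submodule.sum_mem _ fun i _ => ?_
  rw [mem_weightedHomogeneousSubmodule]
  have h1 : (X (Sum.inr i) : S N).IsWeightedHomogeneous (wY N) 0 := by
    have := isWeightedHomogeneous_X ℂ (wY N) (Sum.inr i : Fin (N+1) ⊕ Fin (N+1))
    simpa [wY] using this
  have h2 := hom_pderiv hf (Sum.inl i)
  have : wY N (Sum.inl i) = 1 := rfl
  rw [this] at h2
  simpa using h1.mul h2

lemma hom_deltaOp_wX {n : ℕ} {f : S N} (hf : f.IsWeightedHomogeneous (wX N) n) :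
    (deltaOp N f).IsWeightedHomogeneous (wX N) (n + 1) := by
  rw [← mem_weightedHomogeneousSubmodule, deltaOp]
  refine Submodule.sum_mem _ fun i _ => ?_
  rw [mem_weightedHomogeneousSubmodule]
  have h1 : (X (Sum.inr i) : S N).IsWeightedHomogeneous (wX N) 1 := by
    have := isWeightedHomogeneous_X ℂ (wX N) (Sum.inr i : Fin (N+1) ⊕ Fin (N+1))
    simpa [wX] using this
  have h2 := hom_pderiv hf (Sum.inl i)
  have hw : wX N (Sum.inl i) = 0 := rfl
  rw [hw, Nat.sub_zero] at h2
  have h3 := h1.mul h2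
  rwa [show 1 + n = n + 1 from Nat.add_comm 1 n] at h3

lemma hom_epsOp_wY {m : ℕ} {f : S N} (hf : f.IsWeightedHomogeneous (wY N) m) :
    (epsOp N f).IsWeightedHomogeneous (wY N) (m + 1) := by
  rw [← mem_weightedHomogeneousSubmodule, epsOp]
  refine Submodule.sum_mem _ fun i _ => ?_
  rw [mem_weightedHomogeneousSubmodule]
  have h1 : (X (Sum.inl i) : S N).IsWeightedHomogeneous (wY N) 1 := by
    have := isWeightedHomogeneous_X ℂ (wY N) (Sum.inl i : Fin (N+1) ⊕ Fin (N+1))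
    simpa [wY] using this
  have h2 := hom_pderiv hf (Sum.inr i)
  have hw : wY N (Sum.inr i) = 0 := rfl
  rw [hw, Nat.sub_zero] at h2
  have h3 := h1.mul h2
  rwa [show 1 + m = m + 1 from Nat.add_comm 1 m] at h3

lemma hom_epsOp_wX {n : ℕ} {f : S N} (hf : f.IsWeightedHomogeneous (wX N) n) :
    (epsOp N f).IsWeightedHomogeneous (wX N) (n - 1) := by
  rw [← mem_weightedHomogeneousSubmodule, epsOp]
  refine Submodule.sum_mem _ fun i _ => ?_
  rw [mem_weightedHomogeneousSubmodule]
  have h1 : (X (Sum.inl i) : S N).IsWeightedHomogeneous (wX N) 0 := by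
    have := isWeightedHomogeneous_X ℂ (wX N) (Sum.inl i : Fin (N+1) ⊕ Fin (N+1))
    simpa [wX] using this
  have h2 := hom_pderiv hf (Sum.inr i)
  have hw : wX N (Sum.inr i) = 1 := rfl
  rw [hw] at h2
  simpa using h1.mul h2

lemma pderiv_comm'_s11 (i j : Fin (N+1) ⊕ Fin (N+1)) (f : S N) :
    pderiv i (pderiv j f) = pderiv j (pderiv i f) := by
  rcases eq_or_ne i j with rfl | hij
  · rfl
  conv_lhs => rw [← support_sum_monomial_coeff f]
  conv_rhs => rw [← support_sum_monomial_coeff f]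
  rw [map_sum, map_sum, map_sum, map_sum]
  refine Finset.sum_congr rfl fun s _ => ?_
  rw [pderiv_monomial, pderiv_monomial, pderiv_monomial, pderiv_monomial]
  have hsub : ∀ a b : Fin (N+1) ⊕ Fin (N+1), a ≠ b →
      ((s - Finsupp.single a 1 : (Fin (N+1) ⊕ Fin (N+1)) →₀ ℕ)) b = s b := by
    intro a b hab
    simp [Finsupp.tsub_apply, Finsupp.single_eq_of_ne' hab]
  have hcomm : s - Finsupp.single j 1 - Finsupp.single i 1
      = s - Finsupp.single i 1 - Finsupp.single j 1 := by
    ext k; simp [Finsupp.tsub_apply]; omega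
  rw [hsub j i (Ne.symm hij), hsub i j hij, hcomm]
  ring_nf

lemma delta_eps_comm {m n : ℕ} {f : S N} (hm : f.IsWeightedHomogeneous (wY N) m)
    (hn : f.IsWeightedHomogeneous (wX N) n) :
    deltaOp N (epsOp N f) = epsOp N (deltaOp N f) + ((n : ℂ) - (m : ℂ)) • f := by
  have eulerX : ∑ i : Fin (N+1), X (Sum.inr i) * pderiv (Sum.inr i) f = (n : ℂ) • f := by
    have h := euler hn
    rw [Fintype.sum_sum_type] at h
    simpa [wX] using h
  have eulerY : ∑ i : Fin (N+1), X (Sum.inl i) * pderiv (Sum.inl i) f = (m : ℂ) • f := by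
    have h := euler hm
    rw [Fintype.sum_sum_type] at h
    simpa [wY] using h
  have key : deltaOp N (epsOp N f) + ∑ i : Fin (N+1), X (Sum.inl i) * pderiv (Sum.inl i) f
      = epsOp N (deltaOp N f) + ∑ i : Fin (N+1), X (Sum.inr i) * pderiv (Sum.inr i) f := by
    unfold deltaOp epsOp
    have lhs1 : ∀ i : Fin (N+1),
        X (Sum.inr i) * pderiv (Sum.inl i) (∑ j : Fin (N+1), X (Sum.inl j) * pderiv (Sum.inr j) f)
        = X (Sum.inr i) * pderiv (Sum.inr i) f
          + ∑ j : Fin (N+1), X (Sum.inr i) * (X (Sum.inl j) * pderiv (Sum.inl i) (pderiv (Sum.inr j) f)) := by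
      intro i
      rw [map_sum, Finset.mul_sum]
      have : ∀ j : Fin (N+1),
          X (Sum.inr i) * pderiv (Sum.inl i) (X (Sum.inl j) * pderiv (Sum.inr j) f)
          = (if j = i then X (Sum.inr i) * pderiv (Sum.inr i) f else 0)
            + X (Sum.inr i) * (X (Sum.inl j) * pderiv (Sum.inl i) (pderiv (Sum.inr j) f)) := by
        intro j
        rw [pderiv_mul, mul_add]
        congr 1
        rcases eq_or_ne j i with rfl | hji
        · rw [pderiv_X_self, one_mul, if_pos rfl]
        · rw [pderiv_X_of_ne (by simpa using hji), zero_mul, mul_zero, if_neg hji]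
      rw [Finset.sum_congr rfl fun j _ => this j, Finset.sum_add_distrib,
        Finset.sum_ite_eq' Finset.univ i (fun _ => X (Sum.inr i) * pderiv (Sum.inr i) f)]
      simp
    have rhs1 : ∀ i : Fin (N+1),
        X (Sum.inl i) * pderiv (Sum.inr i) (∑ j : Fin (N+1), X (Sum.inr j) * pderiv (Sum.inl j) f)
        = X (Sum.inl i) * pderiv (Sum.inl i) f
          + ∑ j : Fin (N+1), X (Sum.inl i) * (X (Sum.inr j) * pderiv (Sum.inr i) (pderiv (Sum.inl j) f)) := by
      intro i
      rw [map_sum, Finset.mul_sum]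
      have : ∀ j : Fin (N+1),
          X (Sum.inl i) * pderiv (Sum.inr i) (X (Sum.inr j) * pderiv (Sum.inl j) f)
          = (if j = i then X (Sum.inl i) * pderiv (Sum.inl i) f else 0)
            + X (Sum.inl i) * (X (Sum.inr j) * pderiv (Sum.inr i) (pderiv (Sum.inl j) f)) := by
        intro j
        rw [pderiv_mul, mul_add]
        congr 1
        rcases eq_or_ne j i with rfl | hji
        · rw [pderiv_X_self, one_mul, if_pos rfl]
        · rw [pderiv_X_of_ne (by simpa using hji), zero_mul, mul_zero, if_neg hji]
      rw [Finset.sum_congr rfl fun j _ => this j, Finset.sum_add_distrib,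
        Finset.sum_ite_eq' Finset.univ i (fun _ => X (Sum.inl i) * pderiv (Sum.inl i) f)]
      simp
    rw [Finset.sum_congr rfl fun i _ => lhs1 i, Finset.sum_congr rfl fun i _ => rhs1 i,
      Finset.sum_add_distrib, Finset.sum_add_distrib]
    have swap : ∑ i : Fin (N+1), ∑ j : Fin (N+1),
        X (Sum.inr i) * (X (Sum.inl j) * pderiv (Sum.inl i) (pderiv (Sum.inr j) f))
        = ∑ i : Fin (N+1), ∑ j : Fin (N+1),
        X (Sum.inl i) * (X (Sum.inr j) * pderiv (Sum.inr i) (pderiv (Sum.inl j) f)) := by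
      rw [Finset.sum_comm]
      refine Finset.sum_congr rfl fun j _ => Finset.sum_congr rfl fun i _ => ?_
      rw [pderiv_comm'_s11]
      ring
    rw [swap]
    ring
  have := key
  rw [eulerX, eulerY] at this
  have := congrArg (fun z => z - (m : ℂ) • f) this
  rw [add_sub_cancel_right] at this
  rw [this, sub_smul]
  ring

lemma deltaOp_eq_zero_of_homY_zero {f : S N} (hf : f.IsWeightedHomogeneous (wY N) 0) :
    deltaOp N f = 0 := by
  unfold deltaOp
  refine Finset.sum_eq_zero fun i _ => ?_
  rw [pderiv_eq_zero_of_hom_zero hf (by simp [wY] : wY N (Sum.inl i) ≠ 0), mul_zero]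

lemma hom_iter_eps {d : ℕ} {P : S N} (hP : Bihom N 0 d P) :
    ∀ t, t ≤ d → Bihom N t (d - t) ((epsOp N)^[t] P) := by
  intro t
  induction t with
  | zero => intro _; simpa using hP
  | succ t ih =>
    intro ht
    have h := ih (by omega)
    rw [Function.iterate_succ_apply']
    constructor
    · exact hom_epsOp_wY h.1
    · have := hom_epsOp_wX h.2
      have he : d - t - 1 = d - (t + 1) := by omega
      rwa [he] at this

lemma delta_iter_eps {d : ℕ} {P : S N} (hP : Bihom N 0 d P) :
    ∀ t, t + 1 ≤ d → deltaOp N ((epsOp N)^[t+1] P)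
      = (((t+1) * (d - t) : ℕ) : ℂ) • (epsOp N)^[t] P := by
  intro t
  induction t with
  | zero =>
    intro ht
    rw [Function.iterate_one, Function.iterate_zero_apply,
      delta_eps_comm hP.1 hP.2, deltaOp_eq_zero_of_homY_zero hP.1]
    have : epsOp N (0 : S N) = 0 := by simp [epsOp]
    rw [this, zero_add]
    norm_num
  | succ t ih =>
    intro ht
    have hbi := hom_iter_eps hP (t+1) (by omega)
    rw [Function.iterate_succ_apply' (epsOp N) (t+1),
      delta_eps_comm hbi.1 hbi.2, ih (by omega), epsOp_smul,
      ← Function.iterate_succ_apply' (epsOp N) t]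
    rw [← add_smul]
    congr 1
    push_cast [Nat.cast_sub (show t ≤ d by omega), Nat.cast_sub (show t + 1 ≤ d by omega)]
    ring

lemma Bihom.mul' {m n m' n' : ℕ} {a b : S N} (h : Bihom N m n a) (h' : Bihom N m' n' b) :
    Bihom N (m + m') (n + n') (a * b) := ⟨h.1.mul h'.1, h.2.mul h'.2⟩

lemma Bihom.smul' {m n : ℕ} {a : S N} (c : ℂ) (h : Bihom N m n a) : Bihom N m n (c • a) := by
  have h1 : a ∈ weightedHomogeneousSubmodule ℂ (wY N) m := h.1
  have h2 : a ∈ weightedHomogeneousSubmodule ℂ (wX N) n := h.2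
  exact ⟨Submodule.smul_mem _ c h1, Submodule.smul_mem _ c h2⟩

lemma Bihom.sub' {m n : ℕ} {a b : S N} (h : Bihom N m n a) (h' : Bihom N m n b) :
    Bihom N m n (a - b) := by
  have h1 : a ∈ weightedHomogeneousSubmodule ℂ (wY N) m := h.1
  have h2 : a ∈ weightedHomogeneousSubmodule ℂ (wX N) n := h.2
  have h1' : b ∈ weightedHomogeneousSubmodule ℂ (wY N) m := h'.1
  have h2' : b ∈ weightedHomogeneousSubmodule ℂ (wX N) n := h'.2
  exact ⟨Submodule.sub_mem _ h1 h1', Submodule.sub_mem _ h2 h2'⟩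

lemma bihom_congr {m n m' n' : ℕ} {a : S N} (h : Bihom N m n a) (hm : m = m') (hn : n = n') :
    Bihom N m' n' a := by subst hm; subst hn; exact h

lemma key {d : ℕ} {P : S N} (hP : Bihom N 0 d P) :
    ∀ m p k : ℕ, m + k + 1 ≤ d → ∀ A : S N, Bihom N m p A →
    ∃ B : S N, Bihom N (m + k + 1) (p + (d - (k + 1))) B ∧
      deltaOp N B = A * (epsOp N)^[k] P := by
  intro m
  induction m with
  | zero =>
    intro p k hk A hA
    set c : ℂ := (((k + 1) * (d - k) : ℕ) : ℂ) with hc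
    have hc0 : c ≠ 0 := by
      rw [hc]
      exact_mod_cast Nat.mul_ne_zero (by omega) (by omega)
    have hPk1 := hom_iter_eps hP (k + 1) (by omega)
    refine ⟨c⁻¹ • (A * (epsOp N)^[k + 1] P), ?_, ?_⟩
    · exact Bihom.smul' _ (bihom_congr (hA.mul' hPk1) (by omega) (by omega))
    · rw [deltaOp_smul, deltaOp_mul, deltaOp_eq_zero_of_homY_zero hA.1, zero_mul, zero_add,
        delta_iter_eps hP k (by omega), mul_smul_comm, smul_smul, inv_mul_cancel₀ hc0, one_smul]
  | succ m ih =>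
    intro p k hk A hA
    have hA' : Bihom N m (p + 1) (deltaOp N A) := by
      constructor
      · have := hom_deltaOp_wY hA.1
        rwa [Nat.succ_sub_one] at this
      · exact hom_deltaOp_wX hA.2
    obtain ⟨B', hB'bi, hB'⟩ := ih (p + 1) (k + 1) (by omega) _ hA'
    set c : ℂ := (((k + 1) * (d - k) : ℕ) : ℂ) with hc
    have hc0 : c ≠ 0 := by
      rw [hc]
      exact_mod_cast Nat.mul_ne_zero (by omega) (by omega)
    have hPk1 := hom_iter_eps hP (k + 1) (by omega)
    refine ⟨c⁻¹ • (A * (epsOp N)^[k + 1] P - B'), ?_, ?_⟩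
    · refine Bihom.smul' _ (Bihom.sub' (bihom_congr (hA.mul' hPk1) (by omega) (by omega))
        (bihom_congr hB'bi (by omega) (by omega)))
    · rw [deltaOp_smul, deltaOp_sub, deltaOp_mul, hB',
        delta_iter_eps hP k (by omega), mul_smul_comm]
      have : deltaOp N A * (epsOp N)^[k + 1] P + c • (A * (epsOp N)^[k] P)
          - deltaOp N A * (epsOp N)^[k + 1] P = c • (A * (epsOp N)^[k] P) := by ring
      rw [this, smul_smul, inv_mul_cancel₀ hc0, one_smul]


/-- For `P` homogeneous of degree `d ≥ 3` in the `X`-variables only and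
`A` homogeneous of degree `d − 3` in the `Y`-variables only, there is a bihomogeneous `B` of
bidegree `(d−1, d−2)` with `δ(B) = A · (∑ᵢ Yᵢ·∂P/∂Xᵢ)`. -/
theorem statement11 (N : ℕ) (hN : 2 ≤ N) (d : ℕ) (hd : 3 ≤ d)
    (P : S N)
    (hPsupp : P ∈ MvPolynomial.supported ℂ
      (Set.range (Sum.inr : Fin (N + 1) → Fin (N + 1) ⊕ Fin (N + 1))))
    (hPhom : P.IsWeightedHomogeneous (wX N) d)
    (A : S N)
    (hAsupp : A ∈ MvPolynomial.supported ℂ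
      (Set.range (Sum.inl : Fin (N + 1) → Fin (N + 1) ⊕ Fin (N + 1))))
    (hAhom : A.IsWeightedHomogeneous (wY N) (d - 3)) :
    ∃ B : S N, Bihom N (d - 1) (d - 2) B ∧
      deltaOp N B = A * ∑ i : Fin (N + 1), X (Sum.inl i) * pderiv (Sum.inr i) P := by
  have hP : Bihom N 0 d P := ⟨hom_zero_of_supported_inr hPsupp, hPhom⟩
  have hA : Bihom N (d - 3) 0 A := ⟨hAhom, hom_zero_of_supported_inl hAsupp⟩
  obtain ⟨B, hBbi, hB⟩ := key hP (d - 3) 0 1 (by omega) A hA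
  refine ⟨B, bihom_congr hBbi (by omega) (by omega), ?_⟩
  rw [hB, Function.iterate_one]
  rfl
end
end
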